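/- Let c > 0 be a real number, q ∈ ℝ^M a query feature vector, D a natural number, and let a query consist of D items given by x^F : Fin D → ℝ^{K₁} and x^S : Fin D → ℝ^{K₂}, where every coordinate of every x^S(j) is strictly positive. Let π be a permutation of Fin D that ranks the unscaled items by SIR score in descending order, i.e. for all ranks r ≤ s in Fin D: f_n(q, x^F(π⁻¹(r)), x^S(π⁻¹(r))) ≥ f_n(q, x^F(π⁻¹(s)), x^S(π⁻¹(s))). Then π also ranks the items with uniformly rescaled scale-sensitive features in descending order: for all ranks r ≤ s in Fin D, f_n(q, x^F(π⁻¹(r)), c • x^S(π⁻¹(r))) ≥ f_n(q, x^F(π⁻¹(s)), c • x^S(π⁻¹(s))). Hence the ranking produced by the SIR scoring function is scale-invariant. -/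

import Mathlib

open Finset

/-- The wide path: inner product of the weights `w` with the Kronecker product
of `f_s q` and the componentwise logarithm of the scale-sensitive features. -/
noncomputable def fw {M K₂ L : ℕ} (f_s : (Fin M → ℝ) → Fin L → ℝ)
    (w : Fin L × Fin K₂ → ℝ) (q : Fin M → ℝ) (xS : Fin K₂ → ℝ) : ℝ :=
  ∑ p : Fin L × Fin K₂, w p * f_s q p.1 * Real.log (xS p.2)

/-- The SIR scoring function: sum of the deep path and the wide path. -/
noncomputable def fn {M K₁ K₂ L : ℕ}
    (f_d : (Fin M → ℝ) → (Fin K₁ → ℝ) → ℝ)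
    (f_s : (Fin M → ℝ) → Fin L → ℝ) (w : Fin L × Fin K₂ → ℝ)
    (q : Fin M → ℝ) (xF : Fin K₁ → ℝ) (xS : Fin K₂ → ℝ) : ℝ :=
  f_d q xF + fw f_s w q xS

/-- a permutation ranking the items of a query by SIR score in
descending order also ranks the items with uniformly rescaled scale-sensitive
features in descending order; hence the SIR ranking is scale-invariant. -/
lemma fn_smul {M K₁ K₂ L : ℕ}
    (f_d : (Fin M → ℝ) → (Fin K₁ → ℝ) → ℝ)
    (f_s : (Fin M → ℝ) → Fin L → ℝ) (w : Fin L × Fin K₂ → ℝ)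
    (c : ℝ) (hc : 0 < c) (q : Fin M → ℝ) (xF : Fin K₁ → ℝ) (xS : Fin K₂ → ℝ)
    (hx : ∀ m, 0 < xS m) :
    fn f_d f_s w q xF (c • xS) =
      fn f_d f_s w q xF xS + ∑ p : Fin L × Fin K₂, w p * f_s q p.1 * Real.log c := by
  unfold fn fw
  rw [add_assoc, ← Finset.sum_add_distrib]
  congr 1
  apply Finset.sum_congr rfl
  intro p _
  have : Real.log ((c • xS) p.2) = Real.log (xS p.2) + Real.log c := by
    simp only [Pi.smul_apply, smul_eq_mul]
    rw [Real.log_mul (ne_of_gt hc) (ne_of_gt (hx p.2)), add_comm]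
  rw [this]; ring

theorem sir_ranking_scale_invariant
    {M K₁ K₂ L : ℕ}
    (f_d : (Fin M → ℝ) → (Fin K₁ → ℝ) → ℝ)
    (f_s : (Fin M → ℝ) → Fin L → ℝ) (w : Fin L × Fin K₂ → ℝ)
    (c : ℝ) (hc : 0 < c)
    (q : Fin M → ℝ)
    (D : ℕ) (xF : Fin D → Fin K₁ → ℝ) (xS : Fin D → Fin K₂ → ℝ)
    (hx : ∀ j m, 0 < xS j m)
    (π : Equiv.Perm (Fin D))
    (hπ : ∀ r s : Fin D, r ≤ s →
      fn f_d f_s w q (xF (π.symm r)) (xS (π.symm r)) ≥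
        fn f_d f_s w q (xF (π.symm s)) (xS (π.symm s))) :
    ∀ r s : Fin D, r ≤ s →
      fn f_d f_s w q (xF (π.symm r)) (c • xS (π.symm r)) ≥
        fn f_d f_s w q (xF (π.symm s)) (c • xS (π.symm s)) := by
  intro r s hrs
  rw [fn_smul f_d f_s w c hc q _ _ (hx _), fn_smul f_d f_s w c hc q _ _ (hx _)]
  exact add_le_add_left (hπ r s hrs) _
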